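/- arXiv:2507.04549 — 3 statements merged into one kernel-verified Lean document; each statement's English description precedes it below -/
import Mathlib

section
/- Let k be a field and V a finite-dimensional k-vector space with dim V ≥ 3, and let v ∈ V be a nonzero vector. If g ∈ GL(V) is such that the induced map Λ²g on the exterior square preserves the subspace v ∧ V = {v ∧ w : w ∈ V} ⊆ Λ²V, then g·v is a scalar multiple of v. -/
open ExteriorAlgebra

/-- The wedge of three linearly independent vectors is nonzero. -/
lemma wedge3_ne_zero {k V : Type*} [Field k] [AddCommGroup V] [Module k V]
    {a b c : V} (h : LinearIndependent k ![a, b, c]) :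
    ExteriorAlgebra.ι k a * ExteriorAlgebra.ι k b * ExteriorAlgebra.ι k c ≠ 0 := by
  classical
  have hs : LinearIndepOn k id (Set.range ![a, b, c]) := (linearIndepOn_id_range_iff h.injective).mpr h
  let B := Module.Basis.extend hs
  have hsub : Set.range ![a, b, c] ⊆ hs.extend (Set.subset_univ _) :=
    hs.subset_extend _
  let idx : Fin 3 → hs.extend (Set.subset_univ _) :=
    fun i => ⟨![a, b, c] i, hsub (Set.mem_range_self i)⟩
  have hinj : Function.Injective idx := by
    intro i j hij
    exact h.injective (Subtype.ext_iff.mp hij)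
  let π : V →ₗ[k] (Fin 3 → k) := LinearMap.pi (fun j => B.coord (idx j))
  let A : V [⋀^Fin 3]→ₗ[k] k := Matrix.detRowAlternating.compLinearMap π
  let f : ∀ i : ℕ, V [⋀^Fin i]→ₗ[k] k := Function.update (fun _ => 0) 3 A
  have hB : ∀ i : Fin 3, ![a, b, c] i = B (idx i) := by
    intro i
    exact (Module.Basis.extend_apply_self hs (idx i)).symm
  have hA : A ![a, b, c] = 1 := by
    show Matrix.detRowAlternating (fun i => π (![a, b, c] i)) = 1
    have hmat : (fun i => π (![a, b, c] i)) = (1 : Matrix (Fin 3) (Fin 3) k) := by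
      funext i j
      show B.coord (idx j) (![a, b, c] i) = _
      rw [hB i, Module.Basis.coord_apply, Module.Basis.repr_self, Finsupp.single_apply]
      by_cases hij : i = j
      · rw [if_pos (by rw [hij]), hij, Matrix.one_apply_eq]
      · rw [if_neg (fun hc => hij (hinj hc)), (Matrix.one_apply_ne hij).symm]
    rw [hmat]
    exact Matrix.det_one
  have hmulti : ExteriorAlgebra.ι k a * ExteriorAlgebra.ι k b * ExteriorAlgebra.ι k c
      = ExteriorAlgebra.ιMulti k 3 ![a, b, c] := by
    rw [ExteriorAlgebra.ιMulti_apply]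
    simp [mul_assoc]
  intro hzero
  have hlift := congrArg (ExteriorAlgebra.liftAlternating f) hzero
  rw [hmulti, map_zero, ExteriorAlgebra.liftAlternating_apply_ιMulti] at hlift
  have hf3 : f 3 = A := by simp [f]
  rw [hf3, hA] at hlift
  exact one_ne_zero hlift

/-- If `g ∈ GL(V)` is such that the induced map on the exterior square preserves the
subspace `v ∧ V`, then `g v` is a scalar multiple of `v` (for `dim V ≥ 3`, `v ≠ 0`). -/
theorem stmt_0 {k V : Type*} [Field k] [AddCommGroup V] [Module k V]
    [FiniteDimensional k V] (hdim : 3 ≤ Module.finrank k V)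
    (v : V) (hv : v ≠ 0) (g : V ≃ₗ[k] V)
    (hg : ∀ w : V, ∃ u : V,
      ExteriorAlgebra.map (g : V →ₗ[k] V)
        (ExteriorAlgebra.ι k v * ExteriorAlgebra.ι k w)
        = ExteriorAlgebra.ι k v * ExteriorAlgebra.ι k u) :
    ∃ c : k, g v = c • v := by
  classical
  by_contra hc
  push_neg at hc
  have hgv : g v ∉ Submodule.span k {v} := by
    intro hmem
    obtain ⟨c, hc'⟩ := Submodule.mem_span_singleton.mp hmem
    exact hc c hc'.symm
  -- key wedge vanishing: ∀ w, ι v * ι (g v) * ι w = 0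
  have key : ∀ w : V, ExteriorAlgebra.ι k v * ExteriorAlgebra.ι k (g v)
      * ExteriorAlgebra.ι k w = 0 := by
    intro w
    obtain ⟨u, hu⟩ := hg (g.symm w)
    rw [map_mul, ExteriorAlgebra.map_apply_ι, ExteriorAlgebra.map_apply_ι] at hu
    simp only [LinearEquiv.coe_coe, LinearEquiv.apply_symm_apply] at hu
    rw [mul_assoc, hu, ← mul_assoc, ExteriorAlgebra.ι_sq_zero, zero_mul]
  -- find w outside span {v, g v}
  have hne : Submodule.span k ({v, g v} : Set V) ≠ ⊤ := by
    intro htop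
    have hle : Module.finrank k (Submodule.span k ({v, g v} : Set V)) ≤ 2 := by
      refine (finrank_span_le_card ({v, g v} : Set V)).trans ?_
      rw [Set.toFinset_insert, Set.toFinset_singleton]
      exact (Finset.card_insert_le _ _).trans (by simp)
    rw [htop, finrank_top] at hle
    omega
  obtain ⟨w, hw⟩ : ∃ w : V, w ∉ Submodule.span k ({v, g v} : Set V) := by
    by_contra hall
    push_neg at hall
    exact hne (Submodule.eq_top_iff'.mpr hall)
  -- linear independence of ![v, g v]
  have hgv0 : g v ≠ 0 := fun h => hv (by simpa using g.injective (by simpa using h))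
  have hli2 : LinearIndependent k ![v, g v] := by
    rw [linearIndependent_fin2]
    refine ⟨hgv0, fun a ha => ?_⟩
    simp only [Matrix.cons_val_one, Matrix.head_cons, Matrix.cons_val_zero] at ha
    have ha0 : a ≠ 0 := by rintro rfl; rw [zero_smul] at ha; exact hv ha.symm
    apply hgv
    rw [Submodule.mem_span_singleton]
    refine ⟨a⁻¹, ?_⟩
    conv_lhs => rw [← ha]
    rw [smul_smul, inv_mul_cancel₀ ha0, one_smul]
  -- linear independence of ![v, g v, w]
  have hsnoc : ![v, g v, w] = Fin.snoc ![v, g v] w := by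
    funext i
    fin_cases i <;> rfl
  have hrange : Set.range ![v, g v] = ({v, g v} : Set V) := by
    ext x
    constructor
    · rintro ⟨i, rfl⟩
      fin_cases i <;> simp
    · rintro (rfl | rfl)
      · exact ⟨0, rfl⟩
      · exact ⟨1, rfl⟩
  have hli : LinearIndependent k ![v, g v, w] := by
    rw [hsnoc, linearIndependent_fin_snoc]
    exact ⟨hli2, by rwa [hrange]⟩
  exact wedge3_ne_zero hli (key w)
end

section
/- Let k be an algebraically closed field of characteristic 2 and consider the symplectic Lie algebra sp_{2n}(k) ⊂ sl_{2n}(k) for n ≥ 2. There is no vector-space complement C of sp_{2n}(k) inside sl_{2n}(k) that is invariant under the conjugation action of the symplectic group Sp_{2n}(k); equivalently, the Sp_{2n}(k)-module sl_{2n}(k) does not split as sp_{2n}(k) ⊕ C. -/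
open Matrix

section Aux

set_option linter.unusedSectionVars false

variable {k : Type*} [CommRing k] {ι : Type*} [Fintype ι]

private lemma vmv_mul (v w : ι → k) (M : Matrix ι ι k) :
    vecMulVec v w * M = vecMulVec v (w ᵥ* M) := by
  ext i j
  simp [vecMulVec_apply, Matrix.mul_apply, Matrix.vecMul, dotProduct, Finset.mul_sum, mul_assoc]

private lemma mul_vmv (v w : ι → k) (M : Matrix ι ι k) :
    M * vecMulVec v w = vecMulVec (M *ᵥ v) w := by
  ext i j
  simp [vecMulVec_apply, Matrix.mul_apply, Matrix.mulVec, dotProduct, Finset.sum_mul, mul_assoc]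

private lemma vmv_vmv (a b c d : ι → k) :
    vecMulVec a b * vecMulVec c d = (b ⬝ᵥ c) • vecMulVec a d := by
  ext i j
  simp [vecMulVec_apply, Matrix.mul_apply, dotProduct, Finset.sum_mul, Finset.mul_sum]
  congr 1; ext l; ring

private lemma vmv_transpose (v w : ι → k) : (vecMulVec v w)ᵀ = vecMulVec w v := by
  ext i j; simp [vecMulVec_apply, mul_comm]

private lemma vmv_neg (v w : ι → k) : vecMulVec v (-w) = -vecMulVec v w := by
  ext i j; simp [vecMulVec_apply]

private lemma neg_vmv (v w : ι → k) : vecMulVec (-v) w = -vecMulVec v w := by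
  ext i j; simp [vecMulVec_apply]

variable {m : Type*} [Fintype m] [DecidableEq m]

private lemma vJv (v : (m ⊕ m) → k) : (v ᵥ* Matrix.J m k) ⬝ᵥ v = 0 := by
  simp [Matrix.J, Matrix.vecMul, dotProduct, Fintype.sum_sum_type, Matrix.fromBlocks,
    Finset.sum_mul, Finset.mul_sum, Matrix.one_apply]
  simp [mul_comm]

private lemma Jv_eq (v : (m ⊕ m) → k) : Matrix.J m k *ᵥ v = -(v ᵥ* Matrix.J m k) := by
  have h1 : (Matrix.J m k)ᵀ *ᵥ v = v ᵥ* Matrix.J m k := Matrix.mulVec_transpose _ v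
  rw [Matrix.J_transpose, Matrix.neg_mulVec] at h1
  linear_combination (norm := module) -h1

end Aux

/-- Over an algebraically closed field of characteristic 2 and for `n ≥ 2`, there is no
`Sp_{2n}(k)`-stable linear complement of `sp_{2n}(k)` inside `sl_{2n}(k)`: no submodule `C`
of traceless matrices meets `sp_{2n}` trivially, together with `sp_{2n}` spans all
traceless matrices, and is stable under conjugation by the symplectic group. -/
theorem stmt_11 {k : Type*} [Field k] [IsAlgClosed k] [CharP k 2] (n : ℕ) (hn : 2 ≤ n) :
    ¬ ∃ C : Submodule k (Matrix (Fin n ⊕ Fin n) (Fin n ⊕ Fin n) k),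
        -- C consists of traceless matrices
        (∀ A ∈ C, A.trace = 0) ∧
        -- C meets sp_{2n} trivially
        (∀ A ∈ C, Aᵀ * Matrix.J (Fin n) k + Matrix.J (Fin n) k * A = 0 → A = 0) ∧
        -- C + sp_{2n} = sl_{2n}
        (∀ A : Matrix (Fin n ⊕ Fin n) (Fin n ⊕ Fin n) k, A.trace = 0 →
          ∃ S, (Sᵀ * Matrix.J (Fin n) k + Matrix.J (Fin n) k * S = 0) ∧ A - S ∈ C) ∧
        -- C is stable under conjugation by Sp_{2n}(k)
        (∀ g ∈ Matrix.symplecticGroup (Fin n) k, ∀ A ∈ C, g * A * g⁻¹ ∈ C) := by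
  rintro ⟨C, -, hint, hspan, hstab⟩
  have h2 : (2 : k) = 0 := CharTwo.two_eq_zero
  set Jm : Matrix (Fin n ⊕ Fin n) (Fin n ⊕ Fin n) k := Matrix.J (Fin n) k with hJmdef
  -- a root of X² + X + 1
  obtain ⟨t₀, ht₀'⟩ := IsAlgClosed.exists_root
    (Polynomial.X ^ 2 + Polynomial.X + 1 : Polynomial k) (by
      have hd : (Polynomial.X ^ 2 + Polynomial.X + 1 : Polynomial k).degree = 2 := by
        compute_degree!
      simp [hd])
  have ht₀ : t₀ * t₀ + t₀ + 1 = 0 := by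
    have h := ht₀'
    simp only [Polynomial.IsRoot, Polynomial.eval_add, Polynomial.eval_pow, Polynomial.eval_mul,
      Polynomial.eval_X, Polynomial.eval_one, pow_two] at h
    linear_combination h
  -- Step A : C = 0
  have hC0 : ∀ X ∈ C, X = 0 := by
    intro X hX
    -- the key quadratic-form vanishing
    have key : ∀ v : (Fin n ⊕ Fin n) → k, ((v ᵥ* Jm) ᵥ* X) ⬝ᵥ v = 0 := by
      intro v
      set w : (Fin n ⊕ Fin n) → k := v ᵥ* Jm with hw
      set N : Matrix (Fin n ⊕ Fin n) (Fin n ⊕ Fin n) k := vecMulVec v w with hN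
      set P : Matrix (Fin n ⊕ Fin n) (Fin n ⊕ Fin n) k := vecMulVec v v with hP
      have hwv : w ⬝ᵥ v = 0 := vJv v
      have hvw : v ⬝ᵥ w = 0 := by rw [dotProduct_comm]; exact hwv
      have hNt : Nᵀ = vecMulVec w v := vmv_transpose v w
      have p1 : N * Jm = -P := by
        rw [hN, vmv_mul, hw, Matrix.vecMul_vecMul, Matrix.J_squared]
        rw [Matrix.vecMul_neg, Matrix.vecMul_one, vmv_neg, hP]
      have p2 : Jm * vecMulVec w v = P := by
        rw [mul_vmv, hP]
        congr 1
        rw [hw, Jv_eq, Matrix.vecMul_vecMul, Matrix.J_squared, Matrix.vecMul_neg,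
          Matrix.vecMul_one, neg_neg]
      have p4 : N * N = 0 := by rw [hN, vmv_vmv, hwv, zero_smul]
      have p5 : P * vecMulVec w v = 0 := by rw [hP, vmv_vmv, hvw, zero_smul]
      have pJN : Jm * N = -(vecMulVec w w) := by
        rw [hN, mul_vmv, Jv_eq, ← hw, neg_vmv]
      have pNtJ : Nᵀ * Jm = vecMulVec w w := by
        rw [hNt, vmv_mul, ← hw]
      -- the symplectic transvections
      have hg : ∀ t : k, (1 + t • N) ∈ Matrix.symplecticGroup (Fin n) k := by
        intro t
        rw [SymplecticGroup.mem_iff]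
        have expand : (1 + t • N) * Matrix.J (Fin n) k * (1 + t • N)ᵀ
            = Jm + t • (N * Jm) + t • (Jm * vecMulVec w v)
              + (t * t) • (N * Jm * vecMulVec w v) := by
          rw [transpose_add, transpose_one, transpose_smul, hNt]
          simp only [add_mul, mul_add, one_mul, mul_one, smul_mul_assoc, mul_smul_comm, smul_smul,
            smul_add, add_smul, ← hN, ← hJmdef]
          abel
        rw [expand, p1, p2]
        have : -P * vecMulVec w v = 0 := by rw [neg_mul, p5, neg_zero]
        rw [this, smul_zero, smul_neg]
        rw [← hJmdef]
        abel
      have hginv : ∀ t : k, (1 + t • N)⁻¹ = 1 + t • N := by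
        intro t
        apply Matrix.inv_eq_right_inv
        have expand : (1 + t • N) * (1 + t • N) = 1 + (t + t) • N + (t * t) • (N * N) := by
          simp only [add_mul, mul_add, one_mul, mul_one, smul_mul_assoc, mul_smul_comm, smul_smul,
            smul_add, add_smul, ← hN]
          abel
        rw [expand, p4, smul_zero]
        have : t + t = 0 := by linear_combination t * h2
        rw [this, zero_smul]
        abel
      -- conjugates stay in C
      have hDt : ∀ t : k, t • (N * X + X * N) + (t * t) • (N * X * N) ∈ C := by
        intro t
        have hmem := hstab (1 + t • N) (hg t) X hX
        rw [hginv t] at hmem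
        have expand : (1 + t • N) * X * (1 + t • N)
            = X + (t • (N * X + X * N) + (t * t) • (N * X * N)) := by
          simp only [add_mul, mul_add, one_mul, mul_one, smul_mul_assoc, mul_smul_comm, smul_smul,
            smul_add, add_smul, ← hN]
          abel
        rw [expand] at hmem
        have := C.sub_mem hmem hX
        simpa using this
      -- extract N * X * N ∈ C
      have hB : N * X * N ∈ C := by
        have h1 := hDt 1
        have ht := hDt t₀
        have hcomb : N * X * N
            = (t₀ • (N * X + X * N) + (t₀ * t₀) • (N * X * N))
              + t₀ • ((1 : k) • (N * X + X * N) + ((1 : k) * 1) • (N * X * N)) := by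
          match_scalars
          all_goals first
            | linear_combination -ht₀ + h2
            | linear_combination -t₀ * h2
        rw [hcomb]
        exact C.add_mem ht (C.smul_mem t₀ h1)
      -- N * X * N = c • N with c the quadratic form value
      set c : k := (w ᵥ* X) ⬝ᵥ v with hc
      have hBc : N * X * N = c • N := by
        rw [hN, vmv_mul, vmv_vmv, ← hc]
      -- c • N lies in sp
      have hsp : (c • N)ᵀ * Jm + Jm * (c • N) = 0 := by
        rw [transpose_smul, smul_mul_assoc, mul_smul_comm, pNtJ, pJN, ← smul_add]
        simp
      have hzero : c • N = 0 := by
        apply hint _ (by rw [← hBc]; exact hB)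
        exact hsp
      -- deduce c = 0
      have hent : ∀ i j, c * (v i * w j) = 0 := by
        intro i j
        have := congrFun (congrFun hzero i) j
        simpa [Matrix.smul_apply, vecMulVec_apply, hN] using this
      have hcc : c * c = 0 := by
        have hc2 : c = ∑ j, (∑ i, w i * X i j) * v j := by
          simp [hc, dotProduct, Matrix.vecMul]
        calc c * c = (∑ j, (∑ i, w i * X i j) * v j) * c := by rw [← hc2]
          _ = ∑ j, ∑ i, X i j * (c * (v j * w i)) := by
              rw [Finset.sum_mul]
              refine Finset.sum_congr rfl fun j _ => ?_
              rw [Finset.sum_mul, Finset.sum_mul]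
              refine Finset.sum_congr rfl fun i _ => ?_
              ring
          _ = 0 := by simp [hent]
      exact mul_self_eq_zero.mp hcc
    -- from the quadratic form vanishing, X is symplectic, hence zero
    apply hint X hX
    have hM : ∀ u : (Fin n ⊕ Fin n) → k, (u ᵥ* (Jm * X)) ⬝ᵥ u = 0 := by
      intro u
      have := key u
      rwa [Matrix.vecMul_vecMul] at this
    set M : Matrix (Fin n ⊕ Fin n) (Fin n ⊕ Fin n) k := Jm * X with hMdef
    have hdiag : ∀ i, M i i = 0 := by
      intro i
      have := hM (Pi.single i 1)
      simpa [Matrix.vecMul, dotProduct, Pi.single_apply, Finset.sum_ite_eq] using this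
    have hsymm : ∀ i j, M i j + M j i = 0 := by
      intro i j
      rcases eq_or_ne i j with rfl | hij
      · rw [hdiag i, add_zero]
      · have := hM (Pi.single i 1 + Pi.single j 1)
        rw [Matrix.add_vecMul, add_dotProduct, dotProduct_add, dotProduct_add] at this
        have e11 : (Pi.single i (1:k) ᵥ* M) ⬝ᵥ Pi.single i 1 = M i i := by
          simp [Matrix.vecMul, dotProduct, Pi.single_apply, Finset.sum_ite_eq]
        have e12 : (Pi.single i (1:k) ᵥ* M) ⬝ᵥ Pi.single j 1 = M i j := by
          simp [Matrix.vecMul, dotProduct, Pi.single_apply, Finset.sum_ite_eq]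
        have e21 : (Pi.single j (1:k) ᵥ* M) ⬝ᵥ Pi.single i 1 = M j i := by
          simp [Matrix.vecMul, dotProduct, Pi.single_apply, Finset.sum_ite_eq]
        have e22 : (Pi.single j (1:k) ᵥ* M) ⬝ᵥ Pi.single j 1 = M j j := by
          simp [Matrix.vecMul, dotProduct, Pi.single_apply, Finset.sum_ite_eq]
        rw [e11, e12, e21, e22, hdiag i, hdiag j] at this
        linear_combination this
    have hJt : ∀ a b, Jm a b + Jm b a = 0 := by
      intro a b
      have := congrFun (congrFun (Matrix.J_transpose (Fin n) k) a) b
      rw [Matrix.transpose_apply, Matrix.neg_apply] at this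
      rw [← hJmdef] at this
      linear_combination this
    ext i j
    rw [Matrix.add_apply, Matrix.zero_apply]
    have h1 : (Xᵀ * Jm) i j + M j i = 0 := by
      rw [Matrix.mul_apply, hMdef, Matrix.mul_apply, ← Finset.sum_add_distrib]
      apply Finset.sum_eq_zero
      intro l _
      rw [Matrix.transpose_apply]
      linear_combination X l i * hJt l j
    linear_combination h1 + hsymm i j - M j i * h2
  -- Step B : contradiction with a non-symplectic traceless matrix
  have h01 : (⟨0, by omega⟩ : Fin n) ≠ (⟨1, by omega⟩ : Fin n) := by
    intro h; simpa using congrArg Fin.val h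
  set i0 : Fin n ⊕ Fin n := Sum.inl ⟨0, by omega⟩
  set i1 : Fin n ⊕ Fin n := Sum.inl ⟨1, by omega⟩
  set A : Matrix (Fin n ⊕ Fin n) (Fin n ⊕ Fin n) k := Matrix.single i0 i1 1 with hA
  have htrA : A.trace = 0 := by
    apply Matrix.trace_single_eq_of_ne
    simp only [i0, i1, ne_eq, Sum.inl.injEq]
    exact fun h => h01 h
  obtain ⟨S, hS, hAS⟩ := hspan A htrA
  have hAeqS : A = S := by
    have := hC0 _ hAS
    have : A - S = 0 := this
    linear_combination (norm := abel) this
  have hAsp : Aᵀ * Jm + Jm * A = 0 := by rw [hAeqS]; exact hS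
  have := congrFun (congrFun hAsp (Sum.inr ⟨0, by omega⟩)) i1
  rw [Matrix.add_apply, Matrix.zero_apply, Matrix.mul_apply, Matrix.mul_apply] at this
  have e1 : ∑ l, Aᵀ (Sum.inr (⟨0, by omega⟩ : Fin n)) l * Jm l i1 = 0 := by
    apply Finset.sum_eq_zero
    intro l _
    rw [Matrix.transpose_apply]
    have : A l (Sum.inr (⟨0, by omega⟩ : Fin n)) = 0 := by
      rw [hA]
      simp [Matrix.single, i1]
    rw [this, zero_mul]
  have e2 : ∑ l, Jm (Sum.inr (⟨0, by omega⟩ : Fin n)) l * A l i1 = 1 := by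
    rw [Finset.sum_eq_single i0]
    · rw [hA]
      simp [Matrix.single, i0, i1, hJmdef, Matrix.J, Matrix.fromBlocks, Matrix.one_apply]
    · intro b _ hb
      rw [hA]
      simp [Matrix.single, Ne.symm hb]
    · intro h
      exact absurd (Finset.mem_univ i0) h
  rw [e1, e2] at this
  simpa using this
end

section
/- Let k be a field of characteristic 2 and n ≥ 2. In Λ²(k^{2n+2}) with basis vectors e_i ∧ e_j (0 ≤ i < j ≤ 2n+1), consider the 2n-dimensional subspace N = span{ (e_0 + e_{2n+1}) ∧ e_j : 1 ≤ j ≤ 2n }. If g ∈ GL_{2n+2}(k) is such that Λ²g preserves N, then g·(e_0 + e_{2n+1}) is a scalar multiple of e_0 + e_{2n+1}. -/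
open ExteriorAlgebra

section Aux

variable {k : Type*} [Field k] {V : Type*} [AddCommGroup V] [Module k V]

/-- The bilinear multilinear map `v ↦ φ (v 0) * ψ (v 1)` on `Fin 2`. -/
def wedgeMul (φ ψ : V →ₗ[k] k) : MultilinearMap k (fun _ : Fin 2 => V) k :=
  (MultilinearMap.mkPiAlgebraFin k 2 k).compLinearMap ![φ, ψ]

lemma wedgeMul_apply (φ ψ : V →ₗ[k] k) (v : Fin 2 → V) :
    wedgeMul φ ψ v = φ (v 0) * ψ (v 1) := by
  simp [wedgeMul, List.ofFn_succ]

/-- The wedge of two linear forms, as an alternating map. -/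
def wedgeForm (φ ψ : V →ₗ[k] k) : V [⋀^Fin 2]→ₗ[k] k where
  toMultilinearMap := wedgeMul φ ψ - wedgeMul ψ φ
  map_eq_zero_of_eq' := by
    intro v i j hv hij
    have h2 : wedgeMul φ ψ v - wedgeMul ψ φ v = 0 := by
      have hv01 : v 0 = v 1 := by
        fin_cases i <;> fin_cases j <;> simp_all
      rw [wedgeMul_apply, wedgeMul_apply, hv01]
      ring
    simpa using h2

lemma wedgeForm_apply (φ ψ : V →ₗ[k] k) (x y : V) :
    wedgeForm φ ψ ![x, y] = φ x * ψ y - ψ x * φ y := by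
  show wedgeMul φ ψ ![x, y] - wedgeMul ψ φ ![x, y] = _
  rw [wedgeMul_apply, wedgeMul_apply]
  simp

/-- A family of alternating maps supported in degree 2. -/
noncomputable def extFam (φ ψ : V →ₗ[k] k) : ∀ i : ℕ, V [⋀^Fin i]→ₗ[k] k
  | 2 => wedgeForm φ ψ
  | _ => 0

/-- The linear form on the exterior algebra extracting, on the exterior square,
the coefficient `φ x * ψ y - ψ x * φ y` of `ι x * ι y`. -/
noncomputable def extForm (φ ψ : V →ₗ[k] k) : ExteriorAlgebra k V →ₗ[k] k :=
  ExteriorAlgebra.liftAlternating (extFam φ ψ)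

lemma extForm_ι_mul (φ ψ : V →ₗ[k] k) (x y : V) :
    extForm φ ψ (ExteriorAlgebra.ι k x * ExteriorAlgebra.ι k y)
      = φ x * ψ y - ψ x * φ y := by
  rw [extForm, ExteriorAlgebra.liftAlternating_ι_mul, ExteriorAlgebra.liftAlternating_ι]
  rw [show extFam φ ψ (Nat.succ 1) = wedgeForm φ ψ from rfl]
  rw [AlternatingMap.curryLeft_apply_apply]
  have : (Matrix.vecCons x ![y]) = ![x, y] := rfl
  rw [this, wedgeForm_apply]

/-- Any three vectors in `k²` are linearly dependent. -/
lemma aux3 (s₁ t₁ s₂ t₂ s₃ t₃ : k) :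
    ∃ α β γ : k, ¬(α = 0 ∧ β = 0 ∧ γ = 0) ∧
      α * s₁ + β * s₂ + γ * s₃ = 0 ∧ α * t₁ + β * t₂ + γ * t₃ = 0 := by
  by_cases hd : s₂ * t₃ - s₃ * t₂ = 0 ∧ s₁ * t₃ - s₃ * t₁ = 0 ∧ s₁ * t₂ - s₂ * t₁ = 0
  · obtain ⟨hd1, hd2, hd3⟩ := hd
    by_cases hs1 : s₁ = 0
    · by_cases ht1 : t₁ = 0
      · exact ⟨1, 0, 0, by simp, by simp [hs1], by simp [ht1]⟩
      · refine ⟨t₂ / t₁, -1, 0, by simp, ?_, ?_⟩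
        · have hmul : s₂ * t₁ = 0 := by linear_combination -hd3 + t₂ * hs1
          have hs2 : s₂ = 0 := by
            rcases mul_eq_zero.mp hmul with h | h
            · exact h
            · exact absurd h ht1
          rw [hs1, hs2]; ring
        · field_simp; ring
    · refine ⟨s₂ / s₁, -1, 0, by simp, ?_, ?_⟩
      · field_simp; ring
      · field_simp
        linear_combination -hd3
  · refine ⟨s₂ * t₃ - s₃ * t₂, -(s₁ * t₃ - s₃ * t₁), s₁ * t₂ - s₂ * t₁, ?_, by ring, by ring⟩
    intro ⟨h1, h2, h3⟩
    exact hd ⟨h1, neg_eq_zero.mp h2, h3⟩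

/-- Coordinate functionals adapted to the basis `v₀, e₁, …, e_{2n+1}`. -/
noncomputable def clAux (k : Type*) [Field k] (n : ℕ) (m : ℕ) :
    (Fin (2 * n + 2) → k) →ₗ[k] k :=
  if h : 1 ≤ m ∧ m ≤ 2 * n then
    LinearMap.proj (R := k) (φ := fun _ : Fin (2 * n + 2) => k) (⟨m, by omega⟩ : Fin (2 * n + 2))
  else
    LinearMap.proj (R := k) (φ := fun _ : Fin (2 * n + 2) => k)
        (⟨2 * n + 1, Nat.lt_succ_self _⟩ : Fin (2 * n + 2))
      - LinearMap.proj (R := k) (φ := fun _ : Fin (2 * n + 2) => k)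
        (⟨0, Nat.zero_lt_succ _⟩ : Fin (2 * n + 2))

lemma clAux_pos (k : Type*) [Field k] (n m : ℕ) (h : 1 ≤ m ∧ m ≤ 2 * n)
    (w : Fin (2 * n + 2) → k) : clAux k n m w = w ⟨m, by omega⟩ := by
  rw [clAux, dif_pos h]; rfl

lemma clAux_neg (k : Type*) [Field k] (n m : ℕ) (h : ¬(1 ≤ m ∧ m ≤ 2 * n))
    (w : Fin (2 * n + 2) → k) :
    clAux k n m w = w ⟨2 * n + 1, Nat.lt_succ_self _⟩ - w ⟨0, Nat.zero_lt_succ _⟩ := by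
  rw [clAux, dif_neg h]; rfl

lemma single_apply_eq (k : Type*) [Field k] (N : ℕ) (a b : Fin N) (hab : a.1 = b.1) :
    (Pi.single b (1 : k) : Fin N → k) a = 1 := by
  rw [Pi.single_apply, if_pos (Fin.ext hab)]

lemma single_apply_ne (k : Type*) [Field k] (N : ℕ) (a b : Fin N) (hab : a.1 ≠ b.1) :
    (Pi.single b (1 : k) : Fin N → k) a = 0 := by
  rw [Pi.single_apply, if_neg (fun hc => hab (congrArg Fin.val hc))]

end Aux

/-- In characteristic 2, with `v₀ = e₀ + e_{2n+1}` in `k^{2n+2}` and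
`N = span { v₀ ∧ eⱼ : 1 ≤ j ≤ 2n }` inside the exterior square, any `g ∈ GL_{2n+2}(k)`
whose induced map on the exterior square preserves `N` maps `v₀` to a scalar multiple
of `v₀`. -/
theorem stmt_15 {k : Type*} [Field k] [CharP k 2] (n : ℕ) (hn : 2 ≤ n) :
    let V := Fin (2 * n + 2) → k
    let v₀ : V := (Pi.single ⟨0, by omega⟩ (1 : k) : V)
      + (Pi.single ⟨2 * n + 1, by omega⟩ (1 : k) : V)
    let N : Submodule k (ExteriorAlgebra k V) := Submodule.span k
      {x | ∃ j : Fin (2 * n), x = ExteriorAlgebra.ι k v₀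
        * ExteriorAlgebra.ι k
            (Pi.single (⟨j.1 + 1, by have := j.2; omega⟩ : Fin (2 * n + 2)) (1 : k) : V)}
    ∀ g : V ≃ₗ[k] V,
      (∀ x ∈ N, ExteriorAlgebra.map (g : V →ₗ[k] V) x ∈ N) →
      ∃ c : k, g v₀ = c • v₀ := by
  intro V v₀ N g hg
  classical
  set cl : ℕ → (V →ₗ[k] k) := clAux k n with hcl
  have hclpos : ∀ (m : ℕ) (h : 1 ≤ m ∧ m ≤ 2 * n) (w : V),
      cl m w = w ⟨m, by omega⟩ := fun m h w => clAux_pos k n m h w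
  have hclneg : ∀ (m : ℕ) (h : ¬(1 ≤ m ∧ m ≤ 2 * n)) (w : V),
      cl m w = w ⟨2 * n + 1, by omega⟩ - w ⟨0, by omega⟩ :=
    fun m h w => clAux_neg k n m h w
  have hv0def : v₀ = (Pi.single ⟨0, by omega⟩ (1 : k) : V)
      + (Pi.single ⟨2 * n + 1, by omega⟩ (1 : k) : V) := rfl
  have hv0c : ∀ i : Fin (2 * n + 2), v₀ i
      = (if i.1 = 0 then (1 : k) else 0) + (if i.1 = 2 * n + 1 then (1 : k) else 0) := by
    intro i
    show (Pi.single (⟨0, by omega⟩ : Fin (2 * n + 2)) (1 : k) : Fin (2 * n + 2) → k) i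
      + (Pi.single (⟨2 * n + 1, by omega⟩ : Fin (2 * n + 2)) (1 : k) : Fin (2 * n + 2) → k) i
      = _
    rw [Pi.single_apply, Pi.single_apply]
    congr 1
    · by_cases h : i.1 = 0
      · rw [if_pos (Fin.ext h), if_pos h]
      · rw [if_neg (fun hc => h (congrArg Fin.val hc)), if_neg h]
    · by_cases h : i.1 = 2 * n + 1
      · rw [if_pos (Fin.ext h), if_pos h]
      · rw [if_neg (fun hc => h (congrArg Fin.val hc)), if_neg h]
  -- all adapted coordinates of `v₀` (except the 0th) vanish
  have hclv0 : ∀ m : ℕ, cl m v₀ = 0 := by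
    intro m
    by_cases h : 1 ≤ m ∧ m ≤ 2 * n
    · obtain ⟨hm1, hm2⟩ := h
      rw [hclpos m ⟨hm1, hm2⟩]
      simp only [hv0def, Pi.add_apply, Pi.single_apply, Fin.mk.injEq]
      split_ifs <;> first | ring1 | (exfalso; simp_all only [Fin.mk.injEq, Fin.ext_iff, Fin.val_mk] <;> omega)
    · rw [hclneg m h]
      simp only [hv0def, Pi.add_apply, Pi.single_apply, Fin.mk.injEq]
      split_ifs <;> first | ring1 | (exfalso; simp_all only [Fin.mk.injEq, Fin.ext_iff, Fin.val_mk] <;> omega)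
  -- vectors with vanishing adapted coordinates are multiples of `v₀`
  have hchar : ∀ w : V, (∀ m : ℕ, 1 ≤ m → m ≤ 2 * n + 1 → cl m w = 0) →
      w = (w ⟨0, by omega⟩) • v₀ := by
    intro w hw
    funext i
    show w i = w ⟨0, by omega⟩ * v₀ i
    rw [hv0c i]
    rcases lt_trichotomy i.1 (2 * n + 1) with hi | hi | hi
    · rcases Nat.eq_zero_or_pos i.1 with h0 | h0
      · rw [if_pos h0, if_neg (by omega)]
        have hieq : i = (⟨0, by omega⟩ : Fin (2 * n + 2)) := Fin.ext h0
        rw [hieq]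
        ring
      · have h1 := hw i.1 h0 (by omega)
        rw [hclpos i.1 ⟨h0, by omega⟩] at h1
        have hii : (⟨i.1, by omega⟩ : Fin (2 * n + 2)) = i := Fin.ext rfl
        rw [hii] at h1
        rw [h1, if_neg (by omega), if_neg (by omega)]
        ring
    · have h1 := hw (2 * n + 1) (by omega) (by omega)
      rw [hclneg (2 * n + 1) (by omega)] at h1
      rw [sub_eq_zero] at h1
      have hii : i = (⟨2 * n + 1, by omega⟩ : Fin (2 * n + 2)) := Fin.ext hi
      rw [hii, h1, if_neg (by omega), if_pos rfl]
      ring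
    · omega
  -- the key relations coming from preservation of `N`
  have hrel : ∀ (e : V), (ExteriorAlgebra.ι k v₀ * ExteriorAlgebra.ι k e ∈ N) →
      ∀ i l : ℕ, cl i (g v₀) * cl l (g e) = cl l (g v₀) * cl i (g e) := by
    intro e he i l
    have hmem := hg _ he
    have hmap : ExteriorAlgebra.map (g : V →ₗ[k] V)
        (ExteriorAlgebra.ι k v₀ * ExteriorAlgebra.ι k e)
        = ExteriorAlgebra.ι k (g v₀) * ExteriorAlgebra.ι k (g e) := by
      rw [map_mul, ExteriorAlgebra.map_apply_ι, ExteriorAlgebra.map_apply_ι]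
      rfl
    rw [hmap] at hmem
    have hker : N ≤ LinearMap.ker (extForm (cl i) (cl l)) := by
      rw [show N = Submodule.span k
        {x | ∃ j : Fin (2 * n), x = ExteriorAlgebra.ι k v₀
          * ExteriorAlgebra.ι k
              (Pi.single (⟨j.1 + 1, by have := j.2; omega⟩ : Fin (2 * n + 2)) (1 : k) : V)}
        from rfl]
      rw [Submodule.span_le]
      rintro x ⟨j, rfl⟩
      simp only [SetLike.mem_coe, LinearMap.mem_ker]
      rw [extForm_ι_mul, hclv0, hclv0]
      ring
    have h0 := hker hmem
    rw [LinearMap.mem_ker, extForm_ι_mul] at h0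
    linear_combination h0
  by_cases hA : ∀ m : ℕ, 1 ≤ m → m ≤ 2 * n + 1 → cl m (g v₀) = 0
  · exact ⟨(g v₀) ⟨0, by omega⟩, hchar _ hA⟩
  · exfalso
    push_neg at hA
    obtain ⟨m, hm1, hm2, ham⟩ := hA
    have hgen : ∀ jv : ℕ, (h1 : 1 ≤ jv) → (h3 : jv ≤ 3) →
        ExteriorAlgebra.ι k v₀ * ExteriorAlgebra.ι k
          (Pi.single (⟨jv, by omega⟩ : Fin (2 * n + 2)) (1 : k) : V) ∈ N := by
      intro jv h1 h3
      apply Submodule.subset_span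
      refine ⟨⟨jv - 1, by omega⟩, ?_⟩
      have hfin : (⟨(⟨jv - 1, by omega⟩ : Fin (2 * n)).1 + 1, by omega⟩ : Fin (2 * n + 2))
          = (⟨jv, by omega⟩ : Fin (2 * n + 2)) := by
        apply Fin.ext
        show jv - 1 + 1 = jv
        omega
      rw [hfin]
    -- decomposition g eⱼ = sⱼ • v₀ + tⱼ • g v₀
    have hdecomp : ∀ jv : ℕ, (hj1 : 1 ≤ jv) → (hj3 : jv ≤ 3) →
        ∃ s t : k, g (Pi.single (⟨jv, by omega⟩ : Fin (2 * n + 2)) (1 : k) : V)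
          = s • v₀ + t • g v₀ := by
      intro jv h1 h3
      set e : V := (Pi.single (⟨jv, by omega⟩ : Fin (2 * n + 2)) (1 : k) : V) with he
      set t : k := cl m (g e) / cl m (g v₀) with ht
      set w : V := g e - t • g v₀ with hw
      have hwm : ∀ l : ℕ, 1 ≤ l → l ≤ 2 * n + 1 → cl l w = 0 := by
        intro l hl1 hl2
        have hr := hrel e (hgen jv h1 h3) m l
        rw [hw]
        simp only [map_sub, map_smul, smul_eq_mul, ht]
        rw [sub_eq_zero, div_mul_eq_mul_div, eq_div_iff ham]
        linear_combination hr
      have := hchar w hwm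
      exact ⟨w ⟨0, by omega⟩, t, by rw [← this]; rw [hw]; abel⟩
    obtain ⟨s₁, t₁, h1⟩ := hdecomp 1 (by omega) (by omega)
    obtain ⟨s₂, t₂, h2⟩ := hdecomp 2 (by omega) (by omega)
    obtain ⟨s₃, t₃, h3⟩ := hdecomp 3 (by omega) (by omega)
    obtain ⟨α, β, γ, hne, hs, ht⟩ := aux3 s₁ t₁ s₂ t₂ s₃ t₃
    have hcombo : g (α • (Pi.single (⟨1, by omega⟩ : Fin (2 * n + 2)) (1 : k) : V)
        + β • (Pi.single (⟨2, by omega⟩ : Fin (2 * n + 2)) (1 : k) : V)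
        + γ • (Pi.single (⟨3, by omega⟩ : Fin (2 * n + 2)) (1 : k) : V)) = 0 := by
      rw [map_add, map_add, map_smul, map_smul, map_smul, h1, h2, h3]
      have hmod : α • (s₁ • v₀ + t₁ • g v₀) + β • (s₂ • v₀ + t₂ • g v₀)
          + γ • (s₃ • v₀ + t₃ • g v₀)
          = (α * s₁ + β * s₂ + γ * s₃) • v₀ + (α * t₁ + β * t₂ + γ * t₃) • g v₀ := by
        module
      rw [hmod, hs, ht, zero_smul, zero_smul, add_zero]
    have hzero : α • (Pi.single (⟨1, by omega⟩ : Fin (2 * n + 2)) (1 : k) : V)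
        + β • (Pi.single (⟨2, by omega⟩ : Fin (2 * n + 2)) (1 : k) : V)
        + γ • (Pi.single (⟨3, by omega⟩ : Fin (2 * n + 2)) (1 : k) : V) = 0 :=
      (LinearEquiv.map_eq_zero_iff g).mp hcombo
    have hevalf : ∀ idx : Fin (2 * n + 2),
        α * (Pi.single (⟨1, by omega⟩ : Fin (2 * n + 2)) (1 : k) : Fin (2 * n + 2) → k) idx
        + β * (Pi.single (⟨2, by omega⟩ : Fin (2 * n + 2)) (1 : k) : Fin (2 * n + 2) → k) idx
        + γ * (Pi.single (⟨3, by omega⟩ : Fin (2 * n + 2)) (1 : k) : Fin (2 * n + 2) → k) idx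
        = 0 := by
      intro idx
      exact congrFun hzero idx
    apply hne
    refine ⟨?_, ?_, ?_⟩
    · have h := hevalf ⟨1, by omega⟩
      rw [single_apply_eq k (2 * n + 2) ⟨1, by omega⟩ ⟨1, by omega⟩ rfl,
        single_apply_ne k (2 * n + 2) ⟨1, by omega⟩ ⟨2, by omega⟩ (by norm_num),
        single_apply_ne k (2 * n + 2) ⟨1, by omega⟩ ⟨3, by omega⟩ (by norm_num)] at h
      linear_combination h
    · have h := hevalf ⟨2, by omega⟩
      rw [single_apply_ne k (2 * n + 2) ⟨2, by omega⟩ ⟨1, by omega⟩ (by norm_num),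
        single_apply_eq k (2 * n + 2) ⟨2, by omega⟩ ⟨2, by omega⟩ rfl,
        single_apply_ne k (2 * n + 2) ⟨2, by omega⟩ ⟨3, by omega⟩ (by norm_num)] at h
      linear_combination h
    · have h := hevalf ⟨3, by omega⟩
      rw [single_apply_ne k (2 * n + 2) ⟨3, by omega⟩ ⟨1, by omega⟩ (by norm_num),
        single_apply_ne k (2 * n + 2) ⟨3, by omega⟩ ⟨2, by omega⟩ (by norm_num),
        single_apply_eq k (2 * n + 2) ⟨3, by omega⟩ ⟨3, by omega⟩ rfl] at h
      linear_combination h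
end
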